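/- Let ρ₁ = N(μ₁, σ²) be a one-dimensional Gaussian and ρ₂ = N(μ₂, Σ) an n-dimensional Gaussian with Σ positive definite having largest eigenvalue λ₁ and smallest eigenvalue λ_n. Then the augmented KL-divergence D̂_KL(ρ₁‖ρ₂) = inf_{‖x‖=1, b∈ℝ} D_KL(ρ₁ ‖ N(xᵀμ₂+b, xᵀΣx)) equals (1/2)[σ²/λ_n − 1 + log(λ_n/σ²)] if σ² < λ_n; 0 if λ_n ≤ σ² ≤ λ₁; and (1/2)[σ²/λ₁ − 1 + log(λ₁/σ²)] if σ² > λ₁. -/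

import Mathlib

open MeasureTheory ENNReal Matrix

noncomputable section

/-- The affine map `x ↦ Vx + b` from `ℝⁿ` to `ℝᵐ` (Euclidean spaces). -/
def phiAff {m n : ℕ} (V : Matrix (Fin m) (Fin n) ℝ)
    (b : EuclideanSpace ℝ (Fin m)) (x : EuclideanSpace ℝ (Fin n)) :
    EuclideanSpace ℝ (Fin m) :=
  (EuclideanSpace.equiv (Fin m) ℝ).symm
    (V.mulVec (EuclideanSpace.equiv (Fin n) ℝ x) + (EuclideanSpace.equiv (Fin m) ℝ) b)

/-- The `p`-Wasserstein distance: infimum over couplings of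
`(∫ ‖x − y‖^p dγ)^{1/p}` (Euclidean norm). -/
def wassersteinDist (p : ℝ) {k : ℕ}
    (μ ν : Measure (EuclideanSpace ℝ (Fin k))) : ℝ :=
  sInf {r : ℝ | ∃ γ : Measure (EuclideanSpace ℝ (Fin k) × EuclideanSpace ℝ (Fin k)),
    γ.map Prod.fst = μ ∧ γ.map Prod.snd = ν ∧
    r = (∫ z, ‖z.1 - z.2‖ ^ p ∂γ) ^ (1 / p)}

/-- The `f`-divergence `D_f(μ‖ν) = ∫ f(dμ/dν) dν`. -/
def fDivergence (f : ℝ → ℝ) {k : ℕ}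
    (μ ν : Measure (EuclideanSpace ℝ (Fin k))) : ℝ :=
  ∫ x, f ((μ.rnDeriv ν x).toReal) ∂ν

/-- The Kullback–Leibler divergence `∫ log(dμ/dν) dμ`. -/
def klDivergence {k : ℕ} (μ ν : Measure (EuclideanSpace ℝ (Fin k))) : ℝ :=
  ∫ x, Real.log ((μ.rnDeriv ν x).toReal) ∂μ

/-- The mixture `(1−θ)μ + θν`. -/
def mixture (θ : ℝ) {k : ℕ} (μ ν : Measure (EuclideanSpace ℝ (Fin k))) :
    Measure (EuclideanSpace ℝ (Fin k)) :=
  ENNReal.ofReal (1 - θ) • μ + ENNReal.ofReal θ • ν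

/-- The θ-weighted Jensen–Shannon divergence. -/
def jsDivergence (θ : ℝ) {k : ℕ} (μ ν : Measure (EuclideanSpace ℝ (Fin k))) : ℝ :=
  (1 / 2) * klDivergence μ (mixture θ μ ν) + (1 / 2) * klDivergence ν (mixture θ ν μ)

/-- The total variation metric `sup_A |μ(A) − ν(A)|`. -/
def tvDist {k : ℕ} (μ ν : Measure (EuclideanSpace ℝ (Fin k))) : ℝ :=
  sSup {r : ℝ | ∃ A : Set (EuclideanSpace ℝ (Fin k)), MeasurableSet A ∧
    r = |(μ A).toReal - (ν A).toReal|}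

/-- The Hellinger squared divergence `∫ (√(dμ/dν) − 1)² dν`. -/
def hellingerSq {k : ℕ} (μ ν : Measure (EuclideanSpace ℝ (Fin k))) : ℝ :=
  ∫ x, (Real.sqrt ((μ.rnDeriv ν x).toReal) - 1) ^ 2 ∂ν

/-- `ν` has a strictly positive density w.r.t. Lebesgue measure. -/
def HasPosDensity {k : ℕ} (ν : Measure (EuclideanSpace ℝ (Fin k))) : Prop :=
  ∃ t : EuclideanSpace ℝ (Fin k) → ℝ, Measurable t ∧ (∀ x, 0 < t x) ∧
    ν = volume.withDensity fun x => ENNReal.ofReal (t x)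

end


lemma aux_smul {n : ℕ} (S : Matrix (Fin n) (Fin n) ℝ) (c : ℝ) (y : Fin n → ℝ) :
    (c • y) ⬝ᵥ S.mulVec (c • y) = c ^ 2 * (y ⬝ᵥ S.mulVec y) := by
  rw [Matrix.mulVec_smul, smul_dotProduct, dotProduct_smul, smul_eq_mul, smul_eq_mul]
  ring

lemma aux_ivt {n : ℕ} (S : Matrix (Fin n) (Fin n) ℝ)
    (xm xM : Fin n → ℝ) (hm : (∑ i, xm i ^ 2) = 1) (hM : (∑ i, xM i ^ 2) = 1)
    (t : ℝ) (ht1 : xm ⬝ᵥ S.mulVec xm ≤ t) (ht2 : t ≤ xM ⬝ᵥ S.mulVec xM) :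
    ∃ x : Fin n → ℝ, (∑ i, x i ^ 2) = 1 ∧ x ⬝ᵥ S.mulVec x = t := by
  by_cases hneg : xM = -xm
  · have he : xM ⬝ᵥ S.mulVec xM = xm ⬝ᵥ S.mulVec xm := by
      rw [hneg, show -xm = (-1 : ℝ) • xm by funext i; simp, aux_smul]; ring
    exact ⟨xm, hm, le_antisymm ht1 (by rw [← he]; exact ht2)⟩
  · set y : ℝ → Fin n → ℝ := fun s => (1 - s) • xm + s • xM with hy
    set N : ℝ → ℝ := fun s => ∑ i, y s i ^ 2 with hN
    have hycont : ∀ i, Continuous fun s => y s i := by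
      intro i
      simp only [hy, Pi.add_apply, Pi.smul_apply, smul_eq_mul]
      fun_prop
    have hNcont : Continuous N := by
      apply continuous_finset_sum; intro i _; exact (hycont i).pow 2
    have hnum : Continuous fun s => (y s) ⬝ᵥ S.mulVec (y s) := by
      simp only [dotProduct, Matrix.mulVec]
      apply continuous_finset_sum; intro i _
      exact (hycont i).mul (continuous_finset_sum _ fun j _ => continuous_const.mul (hycont j))
    have hNpos : ∀ s ∈ Set.Icc (0:ℝ) 1, 0 < N s := by
      intro s hs
      have hy0 : y s ≠ 0 := by
        intro h0
        have hyi : ∀ i, (1 - s) * xm i = -(s * xM i) := by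
          intro i
          have := congrFun h0 i
          simp only [hy, Pi.add_apply, Pi.smul_apply, smul_eq_mul, Pi.zero_apply] at this
          linarith
        have hsq : (1 - s) ^ 2 = s ^ 2 := by
          have e1 : ∑ i, ((1-s) * xm i)^2 = (1-s)^2 := by
            simp [mul_pow, ← Finset.mul_sum, hm]
          have e2 : ∑ i, (s * xM i)^2 = s^2 := by
            simp [mul_pow, ← Finset.mul_sum, hM]
          rw [← e1, ← e2]
          exact Finset.sum_congr rfl fun i _ => by rw [hyi i]; ring
        have hs12 : s = 1/2 := by nlinarith
        apply hneg
        funext i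
        have := hyi i
        rw [hs12] at this
        simp only [Pi.neg_apply]
        linarith
      obtain ⟨i0, hi0⟩ := Function.ne_iff.mp hy0
      exact Finset.sum_pos' (fun i _ => sq_nonneg _)
        ⟨i0, Finset.mem_univ _, by simpa using pow_pos (abs_pos.mpr hi0) 2 |>.trans_le (by rw [sq_abs])⟩
    set q : ℝ → ℝ := fun s => ((y s) ⬝ᵥ S.mulVec (y s)) / N s with hq
    have hqcont : ContinuousOn q (Set.Icc 0 1) :=
      hnum.continuousOn.div hNcont.continuousOn (fun s hs => (hNpos s hs).ne')
    have hy0' : y 0 = xm := by funext i; simp [hy]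
    have hy1 : y 1 = xM := by funext i; simp [hy]
    have hq0 : q 0 = xm ⬝ᵥ S.mulVec xm := by simp [hq, hy0', hN, hm]
    have hq1 : q 1 = xM ⬝ᵥ S.mulVec xM := by simp [hq, hy1, hN, hM]
    have := intermediate_value_Icc (zero_le_one) hqcont
    rw [hq0, hq1] at this
    obtain ⟨s, hs, hqs⟩ := this ⟨ht1, ht2⟩
    have hNs := hNpos s hs
    refine ⟨(Real.sqrt (N s))⁻¹ • y s, ?_, ?_⟩
    · have : ∑ i, ((Real.sqrt (N s))⁻¹ • y s) i ^ 2
          = ((Real.sqrt (N s))⁻¹)^2 * ∑ i, y s i ^ 2 := by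
        simp [mul_pow, Finset.mul_sum]
      rw [this]
      rw [inv_pow, Real.sq_sqrt hNs.le]
      field_simp
      rfl
    · rw [aux_smul, inv_pow, Real.sq_sqrt hNs.le, ← hqs]
      rw [hq]
      field_simp


lemma aux_g_nonneg (σ2 t : ℝ) (hσ : 0 < σ2) (ht : 0 < t) :
    0 ≤ (1/2)*(σ2/t - 1 + Real.log (t/σ2)) := by
  have hlog : Real.log (σ2/t) ≤ σ2/t - 1 := Real.log_le_sub_one_of_pos (by positivity)
  have h2 : Real.log (t/σ2) = - Real.log (σ2/t) := by
    rw [← Real.log_inv]; congr 1; field_simp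
  rw [h2]; linarith

lemma aux_g_mono_inc (σ2 a t : ℝ) (hσ : 0 < σ2) (ha : 0 < a) (hσa : σ2 ≤ a) (hat : a ≤ t) :
    (1/2)*(σ2/a - 1 + Real.log (a/σ2)) ≤ (1/2)*(σ2/t - 1 + Real.log (t/σ2)) := by
  have ht : 0 < t := lt_of_lt_of_le ha hat
  have hlog : Real.log (a/t) ≤ a/t - 1 := Real.log_le_sub_one_of_pos (by positivity)
  have hsplit : Real.log (t/σ2) = Real.log (a/σ2) + Real.log (t/a) := by
    rw [← Real.log_mul (by positivity) (by positivity)]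
    congr 1; field_simp
  have h2 : Real.log (t/a) = - Real.log (a/t) := by
    rw [← Real.log_inv]; congr 1; field_simp
  rw [hsplit, h2]
  have key : σ2/a - σ2/t ≤ -(a/t - 1) := by
    have h3 : σ2/a - σ2/t = (σ2/a) * ((t-a)/t) := by field_simp
    have h4 : -(a/t-1) = (t-a)/t := by field_simp; ring
    rw [h3, h4]
    have : σ2/a ≤ 1 := (div_le_one ha).mpr hσa
    nlinarith [div_nonneg (sub_nonneg.mpr hat) ht.le]
  nlinarith

lemma aux_g_mono_dec (σ2 a t : ℝ) (hσ : 0 < σ2) (ht : 0 < t) (hta : t ≤ a) (haσ : a ≤ σ2) :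
    (1/2)*(σ2/a - 1 + Real.log (a/σ2)) ≤ (1/2)*(σ2/t - 1 + Real.log (t/σ2)) := by
  have ha : 0 < a := lt_of_lt_of_le ht hta
  have hlog : Real.log (a/t) ≤ a/t - 1 := Real.log_le_sub_one_of_pos (by positivity)
  have hsplit : Real.log (t/σ2) = Real.log (a/σ2) + Real.log (t/a) := by
    rw [← Real.log_mul (by positivity) (by positivity)]
    congr 1; field_simp
  have h2 : Real.log (t/a) = - Real.log (a/t) := by
    rw [← Real.log_inv]; congr 1; field_simp
  rw [hsplit, h2]
  have key : σ2/a - σ2/t ≤ -(a/t - 1) := by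
    have h3 : σ2/a - σ2/t = (σ2/a) * ((t-a)/t) := by field_simp
    have h4 : -(a/t-1) = (t-a)/t := by field_simp; ring
    rw [h3, h4]
    have h5 : 1 ≤ σ2/a := (one_le_div ha).mpr haσ
    have h6 : (t-a)/t ≤ 0 := div_nonpos_of_nonpos_of_nonneg (sub_nonpos.mpr hta) ht.le
    nlinarith
  nlinarith

theorem augmented_kl_gaussian {n : ℕ} (hn : 0 < n) (μ₁ σ : ℝ) (hσ : 0 < σ)
    (μ₂ : Fin n → ℝ) (S : Matrix (Fin n) (Fin n) ℝ) (hS : S.PosDef)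
    (lam1 lamn : ℝ)
    (hmax : IsGreatest {l : ℝ | ∃ x : Fin n → ℝ, (∑ i, x i ^ 2) = 1 ∧
      l = x ⬝ᵥ S.mulVec x} lam1)
    (hmin : IsLeast {l : ℝ | ∃ x : Fin n → ℝ, (∑ i, x i ^ 2) = 1 ∧
      l = x ⬝ᵥ S.mulVec x} lamn) :
    sInf {r : ℝ | ∃ (x : Fin n → ℝ) (b : ℝ), (∑ i, x i ^ 2) = 1 ∧
      r = (1 / 2) * (σ ^ 2 / (x ⬝ᵥ S.mulVec x)
        + (μ₁ - (x ⬝ᵥ μ₂ + b)) ^ 2 / (x ⬝ᵥ S.mulVec x) - 1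
        + Real.log ((x ⬝ᵥ S.mulVec x) / σ ^ 2))} =
    if σ ^ 2 < lamn then (1 / 2) * (σ ^ 2 / lamn - 1 + Real.log (lamn / σ ^ 2))
    else if σ ^ 2 ≤ lam1 then 0
    else (1 / 2) * (σ ^ 2 / lam1 - 1 + Real.log (lam1 / σ ^ 2)) := by
  have hσ2 : 0 < σ ^ 2 := by positivity
  set A := {r : ℝ | ∃ (x : Fin n → ℝ) (b : ℝ), (∑ i, x i ^ 2) = 1 ∧
      r = (1 / 2) * (σ ^ 2 / (x ⬝ᵥ S.mulVec x)
        + (μ₁ - (x ⬝ᵥ μ₂ + b)) ^ 2 / (x ⬝ᵥ S.mulVec x) - 1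
        + Real.log ((x ⬝ᵥ S.mulVec x) / σ ^ 2))} with hA
  -- any attainable t gives g t ∈ A
  have hmemA : ∀ x : Fin n → ℝ, (∑ i, x i ^ 2) = 1 →
      (1/2) * (σ^2 / (x ⬝ᵥ S.mulVec x) - 1 + Real.log ((x ⬝ᵥ S.mulVec x) / σ^2)) ∈ A := by
    intro x hx
    refine ⟨x, μ₁ - x ⬝ᵥ μ₂, hx, ?_⟩
    have h0 : μ₁ - (x ⬝ᵥ μ₂ + (μ₁ - x ⬝ᵥ μ₂)) = 0 := by ring
    rw [h0]
    ring
  -- positivity of attainable values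
  have hpos : ∀ x : Fin n → ℝ, (∑ i, x i ^ 2) = 1 → 0 < x ⬝ᵥ S.mulVec x := by
    intro x hx
    have hx0 : x ≠ 0 := by
      intro h; rw [h] at hx; simp at hx
    have := hS.dotProduct_mulVec_pos hx0
    simpa using this
  have hlamn_pos : 0 < lamn := by
    obtain ⟨x, hx, hl⟩ := hmin.1
    rw [hl]; exact hpos x hx
  have hlam1_pos : 0 < lam1 := by
    obtain ⟨x, hx, hl⟩ := hmax.1
    rw [hl]; exact hpos x hx
  -- generic: every r ∈ A is ≥ g t for its t, with lamn ≤ t ≤ lam1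
  have hbound : ∀ r ∈ A, ∃ t : ℝ, 0 < t ∧ lamn ≤ t ∧ t ≤ lam1 ∧
      (1/2) * (σ^2 / t - 1 + Real.log (t / σ^2)) ≤ r := by
    rintro r ⟨x, b, hx, rfl⟩
    refine ⟨x ⬝ᵥ S.mulVec x, hpos x hx, hmin.2 ⟨x, hx, rfl⟩, hmax.2 ⟨x, hx, rfl⟩, ?_⟩
    have ht := hpos x hx
    have : 0 ≤ (μ₁ - (x ⬝ᵥ μ₂ + b)) ^ 2 / (x ⬝ᵥ S.mulVec x) := by positivity
    linarith
  split_ifs with h1 h2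
  · -- σ² < lamn
    obtain ⟨xn, hxn, hln⟩ := hmin.1
    have hlb : ∀ r ∈ A, (1/2) * (σ^2 / lamn - 1 + Real.log (lamn / σ^2)) ≤ r := by
      intro r hr
      obtain ⟨t, ht, htn, ht1, hgt⟩ := hbound r hr
      exact le_trans (aux_g_mono_inc (σ^2) lamn t hσ2 hlamn_pos h1.le htn) hgt
    refine le_antisymm (csInf_le ⟨_, hlb⟩ ?_) (le_csInf ⟨_, hmemA xn hxn⟩ hlb)
    have := hmemA xn hxn
    rwa [← hln] at this
  · -- lamn ≤ σ² ≤ lam1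
    push_neg at h1
    obtain ⟨xn, hxn, hln⟩ := hmin.1
    obtain ⟨xM, hxM, hlM⟩ := hmax.1
    obtain ⟨x, hx, hxt⟩ := aux_ivt S xn xM hxn hxM (σ^2) (by rw [← hln]; exact h1) (by rw [← hlM]; exact h2)
    have hlb : ∀ r ∈ A, 0 ≤ r := by
      intro r hr
      obtain ⟨t, ht, _, _, hgt⟩ := hbound r hr
      exact le_trans (aux_g_nonneg (σ^2) t hσ2 ht) hgt
    refine le_antisymm (csInf_le ⟨_, hlb⟩ ?_) (le_csInf ⟨_, hmemA x hx⟩ hlb)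
    have := hmemA x hx
    rw [hxt] at this
    simpa [div_self hσ2.ne'] using this
  · -- σ² > lam1
    push_neg at h2
    obtain ⟨xM, hxM, hlM⟩ := hmax.1
    have hlb : ∀ r ∈ A, (1/2) * (σ^2 / lam1 - 1 + Real.log (lam1 / σ^2)) ≤ r := by
      intro r hr
      obtain ⟨t, ht, htn, ht1, hgt⟩ := hbound r hr
      exact le_trans (aux_g_mono_dec (σ^2) lam1 t hσ2 ht ht1 h2.le) hgt
    refine le_antisymm (csInf_le ⟨_, hlb⟩ ?_) (le_csInf ⟨_, hmemA xM hxM⟩ hlb)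
    have := hmemA xM hxM
    rwa [← hlM] at this
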